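/- Let {x^k} be generated by the double-layer fixed point algorithm under conditions (i) and (ii), and assume in addition: (iii) if lim_{k→∞} max_{i∈I_k} p_i(x^k) = 0 then lim_{k→∞} max_{j∈J_k} p_j(x^k) = 0; (iv) for every bounded sequence {y^k} ⊆ H and each i ∈ I, p_i(y^k) → 0 if and only if ‖U_i y^k − y^k‖ → 0. If for each i ∈ I the operator U_i is weakly regular, then {x^k} converges weakly to some point x^∞ ∈ C. -/

import Mathlib

open Filter Function Metric Bornology RealInnerProductSpace

set_option maxHeartbeats 1000000 in
theorem weak_bw {H : Type*} [NormedAddCommGroup H] [InnerProductSpace ℝ H] [CompleteSpace H]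
    (y : ℕ → H) (M : ℝ) (hM : ∀ k, ‖y k‖ ≤ M) :
    ∃ (φ : ℕ → ℕ) (z : H), StrictMono φ ∧
      ∀ w : H, Tendsto (fun k => ⟪y (φ k), w⟫) atTop (nhds ⟪z, w⟫) := by
  have hM0 : 0 ≤ M := le_trans (norm_nonneg _) (hM 0)
  have hcomp : IsSeqCompact (Set.univ.pi (fun _ : ℕ => Set.Icc (-(M*M)) (M*M))) :=
    (isCompact_univ_pi (fun _ => isCompact_Icc)).isSeqCompact
  have hmem : ∀ k, (fun j => ⟪y k, y j⟫) ∈ Set.univ.pi (fun _ : ℕ => Set.Icc (-(M*M)) (M*M)) := by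
    intro k j _
    have := abs_real_inner_le_norm (y k) (y j)
    have h2 : ‖y k‖ * ‖y j‖ ≤ M * M :=
      mul_le_mul (hM k) (hM j) (norm_nonneg _) hM0
    constructor
    · linarith [(abs_le.mp (this.trans h2)).1]
    · linarith [(abs_le.mp (this.trans h2)).2]
  obtain ⟨a, -, φ, hφ, hconv⟩ := hcomp hmem
  have hpt : ∀ j, Tendsto (fun k => ⟪y (φ k), y j⟫) atTop (nhds (a j)) := by
    intro j
    exact (tendsto_pi_nhds.mp hconv) j
  set S : Submodule ℝ H :=
    { carrier := {w | ∃ L, Tendsto (fun k => ⟪y (φ k), w⟫) atTop (nhds L)}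
      add_mem' := by
        rintro w w' ⟨L, hL⟩ ⟨L', hL'⟩
        exact ⟨L + L', by simpa [inner_add_right] using hL.add hL'⟩
      zero_mem' := ⟨0, by simp⟩
      smul_mem' := by
        rintro c w ⟨L, hL⟩
        exact ⟨c * L, by simpa [real_inner_smul_right] using hL.const_mul c⟩ } with hS
  have hSclosed : IsClosed (S : Set H) := by
    rw [← closure_subset_iff_isClosed]
    intro w hw
    have hcauchy : CauchySeq (fun k => ⟪y (φ k), w⟫) := by
      rw [Metric.cauchySeq_iff]
      intro ε hε
      obtain ⟨w', hw'S, hw'⟩ : ∃ w' ∈ (S : Set H), dist w w' < ε / (4 * (M + 1)) := by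
        have := Metric.mem_closure_iff.mp hw (ε / (4 * (M + 1))) (by positivity)
        simpa using this
      obtain ⟨L, hL⟩ := hw'S
      have hLc : CauchySeq (fun k => ⟪y (φ k), w'⟫) := hL.cauchySeq
      obtain ⟨N, hN⟩ := Metric.cauchySeq_iff.mp hLc (ε / 2) (by positivity)
      refine ⟨N, fun m hm n hn => ?_⟩
      have key : ∀ k, |⟪y (φ k), w⟫ - ⟪y (φ k), w'⟫| ≤ M * ‖w - w'‖ := by
        intro k
        rw [← inner_sub_right]
        exact (abs_real_inner_le_norm _ _).trans
          (mul_le_mul_of_nonneg_right (hM _) (norm_nonneg _))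
      have hd : ‖w - w'‖ < ε / (4 * (M + 1)) := by
        rwa [dist_eq_norm] at hw'
      have h1 : M * ‖w - w'‖ ≤ (M+1) * (ε / (4 * (M + 1))) := by
        apply mul_le_mul (by linarith) hd.le (norm_nonneg _) (by positivity)
      have h2 : (M+1) * (ε / (4 * (M + 1))) = ε / 4 := by
        field_simp
      have h3 : dist ⟪y (φ m), w'⟫ ⟪y (φ n), w'⟫ < ε / 2 := hN m hm n hn
      rw [Real.dist_eq] at h3 ⊢
      calc |⟪y (φ m), w⟫ - ⟪y (φ n), w⟫|
          ≤ |⟪y (φ m), w⟫ - ⟪y (φ m), w'⟫| + |⟪y (φ m), w'⟫ - ⟪y (φ n), w'⟫|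
            + |⟪y (φ n), w'⟫ - ⟪y (φ n), w⟫| := by
              have := abs_sub_le (⟪y (φ m), w⟫) (⟪y (φ m), w'⟫) (⟪y (φ n), w⟫)
              have h4 := abs_sub_le (⟪y (φ m), w'⟫) (⟪y (φ n), w'⟫) (⟪y (φ n), w⟫)
              linarith
        _ < ε := by
              have k1 := key m
              have k2 := key n
              rw [abs_sub_comm (⟪y (φ n), w'⟫)] at *
              linarith
    obtain ⟨L, hL⟩ := cauchySeq_tendsto_of_complete hcauchy
    exact ⟨L, hL⟩
  set K : Submodule ℝ H := (Submodule.span ℝ (Set.range y)).topologicalClosure with hK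
  have hKS : K ≤ S := by
    refine Submodule.topologicalClosure_minimal (Submodule.span ℝ (Set.range y)) ?_ hSclosed
    rw [Submodule.span_le]
    rintro _ ⟨j, rfl⟩
    exact ⟨a j, hpt j⟩
  have hyK : ∀ k, y k ∈ K :=
    fun k => Submodule.le_topologicalClosure _ (Submodule.subset_span ⟨k, rfl⟩)
  have htop : ∀ w : H, w ∈ S := by
    intro w
    have hPw : (K.orthogonalProjectionOnto w : H) ∈ S := hKS (K.orthogonalProjectionOnto w).2
    have hrS : w - (K.orthogonalProjectionOnto w : H) ∈ S := by
      refine ⟨0, ?_⟩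
      have : ∀ k, ⟪y (φ k), w - (K.orthogonalProjectionOnto w : H)⟫ = 0 := by
        intro k
        exact (Submodule.mem_orthogonal K _).mp
          (K.sub_starProjection_mem_orthogonal w) (y (φ k)) (hyK (φ k))
      exact (tendsto_congr this).mpr tendsto_const_nhds
    have := S.add_mem hPw hrS
    simpa using this
  choose F0 hF0 using htop
  have hadd : ∀ w w', F0 (w + w') = F0 w + F0 w' := by
    intro w w'
    refine tendsto_nhds_unique (hF0 (w + w')) ?_
    simpa [inner_add_right] using (hF0 w).add (hF0 w')
  have hsmul : ∀ (c : ℝ) w, F0 (c • w) = c * F0 w := by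
    intro c w
    refine tendsto_nhds_unique (hF0 (c • w)) ?_
    simpa [real_inner_smul_right] using (hF0 w).const_mul c
  have hbound : ∀ w, ‖F0 w‖ ≤ M * ‖w‖ := by
    intro w
    have : Tendsto (fun k => |⟪y (φ k), w⟫|) atTop (nhds |F0 w|) := (hF0 w).abs
    refine le_of_tendsto this (Eventually.of_forall fun k => ?_)
    exact (abs_real_inner_le_norm _ _).trans
      (mul_le_mul_of_nonneg_right (hM _) (norm_nonneg _))
  set Flin : H →ₗ[ℝ] ℝ :=
    { toFun := F0
      map_add' := hadd
      map_smul' := fun c w => by simpa using hsmul c w }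
  set F : H →L[ℝ] ℝ := LinearMap.mkContinuous Flin M hbound with hF
  refine ⟨φ, (InnerProductSpace.toDual ℝ H).symm F, hφ, fun w => ?_⟩
  have : ⟪(InnerProductSpace.toDual ℝ H).symm F, w⟫ = F w :=
    InnerProductSpace.toDual_symm_apply
  rw [this]
  exact hF0 w

set_option maxHeartbeats 2000000 in
/-- Weak convergence of the double-layer fixed point algorithm with
weakly regular cutters. -/
theorem doubleLayer_weak_convergence
    {H : Type*} [NormedAddCommGroup H] [InnerProductSpace ℝ H] [CompleteSpace H]
    {m : ℕ} [NeZero m]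
    (U : Fin m → H → H) (p : Fin m → H → ℝ)
    (hcutter : ∀ i, ∀ x : H, ∀ z ∈ fixedPoints (U i), ⟪x - U i x, z - U i x⟫ ≤ 0)
    (hpnonneg : ∀ i, ∀ x : H, 0 ≤ p i x)
    (hpfix : ∀ i, fixedPoints (U i) = {x : H | p i x = 0})
    (hC : (⋂ i, fixedPoints (U i)).Nonempty)
    (x : ℕ → H) (Ik Jk : ℕ → Finset (Fin m)) (α : ℕ → ℝ) (ω : ℕ → Fin m → ℝ)
    (hIkne : ∀ k, (Ik k).Nonempty) (hIJ : ∀ k, Ik k ⊆ Jk k)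
    (αminus αplus ωminus : ℝ)
    (hαminus : αminus ∈ Set.Ioc (0 : ℝ) 1) (hαplus : αplus ∈ Set.Ico (1 : ℝ) 2)
    (hωminus : ωminus ∈ Set.Ioc (0 : ℝ) 1)
    (hα : ∀ k, α k ∈ Set.Icc αminus αplus)
    (hω : ∀ k, ∀ i ∈ Ik k, ω k i ∈ Set.Icc ωminus 1)
    (hωsum : ∀ k, ∑ i ∈ Ik k, ω k i = 1)
    (hrec : ∀ k, x (k + 1) = x k + α k • ((∑ i ∈ Ik k, ω k i • U i (x k)) - x k))
    (s : ℕ) (hs : 1 ≤ s)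
    (hcover : ∀ k, ∀ i : Fin m, ∃ l < s, i ∈ Jk (k + l))
    (hiii : Tendsto (fun k => (Ik k).sup' (hIkne k) fun i => p i (x k)) atTop (nhds 0) →
      Tendsto (fun k => (Jk k).sup' ((hIkne k).mono (hIJ k)) fun i => p i (x k))
        atTop (nhds 0))
    (hiv : ∀ y : ℕ → H, IsBounded (Set.range y) → ∀ i,
      (Tendsto (fun k => p i (y k)) atTop (nhds 0) ↔
        Tendsto (fun k => ‖U i (y k) - y k‖) atTop (nhds 0)))
    (hwr : ∀ i, ∀ (y : ℕ → H) (z : H),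
      (∀ w : H, Tendsto (fun k => ⟪y k, w⟫) atTop (nhds ⟪z, w⟫)) →
      Tendsto (fun k => ‖U i (y k) - y k‖) atTop (nhds 0) →
      z ∈ fixedPoints (U i)) :
    ∃ xinf ∈ ⋂ i, fixedPoints (U i), ∀ w : H,
      Tendsto (fun k => ⟪x k, w⟫) atTop (nhds ⟪xinf, w⟫) := by
  classical
  obtain ⟨z0, hz0'⟩ := hC
  rw [Set.mem_iInter] at hz0'
  have hz0 : ∀ i, z0 ∈ fixedPoints (U i) := hz0'
  have hαk : ∀ k, 0 < α k ∧ α k < 2 := fun k =>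
    ⟨lt_of_lt_of_le hαminus.1 (hα k).1, lt_of_le_of_lt (hα k).2 hαplus.2⟩
  have hωnonneg : ∀ k, ∀ i ∈ Ik k, 0 ≤ ω k i := fun k i hi =>
    le_trans hωminus.1.le (hω k i hi).1
  set S : ℕ → ℝ := fun k => ∑ i ∈ Ik k, ω k i * ‖U i (x k) - x k‖^2 with hSdef
  have hSnonneg : ∀ k, 0 ≤ S k := fun k => Finset.sum_nonneg fun i hi =>
    mul_nonneg (hωnonneg k i hi) (sq_nonneg _)
  set v : ℕ → H := fun k => (∑ i ∈ Ik k, ω k i • U i (x k)) - x k with hvdef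
  have hrec' : ∀ k, x (k+1) = x k + α k • v k := fun k => hrec k
  have hvsum : ∀ k, v k = ∑ i ∈ Ik k, ω k i • (U i (x k) - x k) := by
    intro k
    simp only [hvdef]
    rw [show (∑ i ∈ Ik k, ω k i • (U i (x k) - x k))
        = (∑ i ∈ Ik k, ω k i • U i (x k)) - (∑ i ∈ Ik k, ω k i) • x k by
      rw [Finset.sum_smul]
      rw [← Finset.sum_sub_distrib]
      exact Finset.sum_congr rfl fun i _ => smul_sub _ _ _]
    rw [hωsum k, one_smul]
  have hvnorm : ∀ k, ‖v k‖^2 ≤ S k := by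
    intro k
    have h1 : ‖v k‖ ≤ ∑ i ∈ Ik k, ω k i * ‖U i (x k) - x k‖ := by
      rw [hvsum k]
      refine (norm_sum_le _ _).trans ?_
      refine le_of_eq (Finset.sum_congr rfl fun i hi => ?_)
      rw [norm_smul, Real.norm_eq_abs, abs_of_nonneg (hωnonneg k i hi)]
    have h2 : (∑ i ∈ Ik k, ω k i * ‖U i (x k) - x k‖)^2 ≤ S k := by
      have h3 := Finset.sum_mul_sq_le_sq_mul_sq (Ik k)
        (fun i => Real.sqrt (ω k i)) (fun i => Real.sqrt (ω k i) * ‖U i (x k) - x k‖)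
      have e1 : ∀ i ∈ Ik k, Real.sqrt (ω k i) * (Real.sqrt (ω k i) * ‖U i (x k) - x k‖)
          = ω k i * ‖U i (x k) - x k‖ := fun i hi => by
        rw [← mul_assoc, Real.mul_self_sqrt (hωnonneg k i hi)]
      have e2 : ∀ i ∈ Ik k, Real.sqrt (ω k i)^2 = ω k i := fun i hi =>
        Real.sq_sqrt (hωnonneg k i hi)
      have e3 : ∀ i ∈ Ik k, (Real.sqrt (ω k i) * ‖U i (x k) - x k‖)^2
          = ω k i * ‖U i (x k) - x k‖^2 := fun i hi => by
        rw [mul_pow, Real.sq_sqrt (hωnonneg k i hi)]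
      rw [Finset.sum_congr rfl e1, Finset.sum_congr rfl e2, Finset.sum_congr rfl e3,
        hωsum k, one_mul] at h3
      exact h3
    calc ‖v k‖^2 ≤ (∑ i ∈ Ik k, ω k i * ‖U i (x k) - x k‖)^2 :=
          pow_le_pow_left₀ (norm_nonneg _) h1 2
      _ ≤ S k := h2
  have hinner : ∀ (z : H), (∀ i, z ∈ fixedPoints (U i)) → ∀ k, S k ≤ ⟪v k, z - x k⟫ := by
    intro z hz k
    rw [hvsum k, sum_inner]
    refine Finset.sum_le_sum fun i hi => ?_
    rw [real_inner_smul_left]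
    refine mul_le_mul_of_nonneg_left ?_ (hωnonneg k i hi)
    have hc := hcutter i (x k) z (hz i)
    have e1 : z - x k = (z - U i (x k)) + (U i (x k) - x k) := by abel
    have e2 : ⟪U i (x k) - x k, z - x k⟫
        = ⟪U i (x k) - x k, z - U i (x k)⟫ + ‖U i (x k) - x k‖^2 := by
      rw [e1, inner_add_right, real_inner_self_eq_norm_sq]
    have e3 : ⟪U i (x k) - x k, z - U i (x k)⟫ = -⟪x k - U i (x k), z - U i (x k)⟫ := by
      rw [← inner_neg_left, neg_sub]
    rw [e2, e3]
    linarith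
  have hfejer : ∀ (z : H), (∀ i, z ∈ fixedPoints (U i)) → ∀ k,
      ‖x (k+1) - z‖^2 ≤ ‖x k - z‖^2 - α k * (2 - α k) * S k := by
    intro z hz k
    have hx1 : x (k+1) - z = (x k - z) + α k • v k := by
      rw [hrec' k]; abel
    rw [hx1, norm_add_sq_real]
    have h1 : ⟪x k - z, α k • v k⟫ = - (α k * ⟪v k, z - x k⟫) := by
      rw [real_inner_smul_right, real_inner_comm,
        show x k - z = -(z - x k) by abel, inner_neg_right]
      ring
    have h2 : ‖α k • v k‖^2 = α k^2 * ‖v k‖^2 := by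
      rw [norm_smul, Real.norm_eq_abs, abs_of_pos (hαk k).1, mul_pow]
    rw [h1, h2]
    have hi := hinner z hz k
    have hv2 := hvnorm k
    have ha1 := (hαk k).1
    have ha2 := (hαk k).2
    have t1 : α k^2 * ‖v k‖^2 ≤ α k^2 * S k :=
      mul_le_mul_of_nonneg_left hv2 (sq_nonneg _)
    have t2 : 2 * α k * S k ≤ 2 * α k * ⟪v k, z - x k⟫ :=
      mul_le_mul_of_nonneg_left hi (by positivity)
    nlinarith [hSnonneg k]
  have hanti : ∀ (z : H), (∀ i, z ∈ fixedPoints (U i)) →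
      Antitone (fun k => ‖x k - z‖^2) := by
    intro z hz
    refine antitone_nat_of_succ_le fun k => ?_
    have h1 := hfejer z hz k
    have h2 : 0 ≤ α k * (2 - α k) * S k :=
      mul_nonneg (mul_nonneg (hαk k).1.le (by linarith [(hαk k).2])) (hSnonneg k)
    linarith
  have hlim : ∀ (z : H), (∀ i, z ∈ fixedPoints (U i)) →
      ∃ d, Tendsto (fun k => ‖x k - z‖^2) atTop (nhds d) := by
    intro z hz
    refine ⟨_, tendsto_atTop_ciInf (hanti z hz) ⟨0, ?_⟩⟩
    rintro _ ⟨k, rfl⟩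
    positivity
  obtain ⟨d0, hd0⟩ := hlim z0 hz0
  have hc0 : 0 < αminus * (2 - αplus) := mul_pos hαminus.1 (by linarith [hαplus.2])
  have hcS : ∀ k, αminus * (2 - αplus) * S k ≤ ‖x k - z0‖^2 - ‖x (k+1) - z0‖^2 := by
    intro k
    have h1 := hfejer z0 hz0 k
    have h2 : αminus * (2 - αplus) * S k ≤ α k * (2 - α k) * S k := by
      refine mul_le_mul_of_nonneg_right ?_ (hSnonneg k)
      exact mul_le_mul (hα k).1 (by linarith [(hα k).2]) (by linarith [hαplus.2])
        (hαk k).1.le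
    linarith
  have hStend : Tendsto S atTop (nhds 0) := by
    have hdiff : Tendsto (fun k => ‖x k - z0‖^2 - ‖x (k+1) - z0‖^2) atTop (nhds 0) := by
      have h1 : Tendsto (fun k => ‖x (k+1) - z0‖^2) atTop (nhds d0) :=
        hd0.comp (tendsto_add_atTop_nat 1)
      simpa using hd0.sub h1
    refine squeeze_zero
      (g := fun k => (αminus * (2 - αplus))⁻¹ * (‖x k - z0‖^2 - ‖x (k+1) - z0‖^2))
      hSnonneg (fun k => ?_) (by simpa using hdiff.const_mul (αminus * (2 - αplus))⁻¹)
    show S k ≤ (αminus * (2 - αplus))⁻¹ * (‖x k - z0‖^2 - ‖x (k+1) - z0‖^2)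
    rw [inv_mul_eq_div, le_div_iff₀ hc0]
    calc S k * (αminus * (2 - αplus)) = αminus * (2 - αplus) * S k := by ring
      _ ≤ _ := hcS k
  set B : ℝ := ‖x 0 - z0‖ + ‖z0‖ with hBdef
  have hz0B : ‖z0‖ ≤ B := by
    simp only [hBdef]
    linarith [norm_nonneg (x 0 - z0)]
  have hxbound : ∀ k, ‖x k‖ ≤ B := by
    intro k
    have h1 : ‖x k - z0‖^2 ≤ ‖x 0 - z0‖^2 := hanti z0 hz0 (Nat.zero_le k)
    have h2 : ‖x k - z0‖ ≤ ‖x 0 - z0‖ := by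
      nlinarith [norm_nonneg (x k - z0), norm_nonneg (x 0 - z0)]
    calc ‖x k‖ = ‖(x k - z0) + z0‖ := by rw [sub_add_cancel]
      _ ≤ ‖x k - z0‖ + ‖z0‖ := norm_add_le _ _
      _ ≤ B := by simp only [hBdef]; linarith
  have hboundedOf : ∀ y : ℕ → H, (∀ k, ‖y k‖ ≤ B) → IsBounded (Set.range y) := by
    intro y hy
    rw [isBounded_iff_forall_norm_le]
    exact ⟨B, by rintro _ ⟨k, rfl⟩; exact hy k⟩
  -- sequences modified outside the index sets
  set yI : Fin m → ℕ → H := fun i k => if i ∈ Ik k then x k else z0 with hyIdef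
  set wJ : Fin m → ℕ → H := fun j k => if j ∈ Jk k then x k else z0 with hwJdef
  have hyIbound : ∀ i k, ‖yI i k‖ ≤ B := by
    intro i k
    simp only [hyIdef]
    split
    · exact hxbound k
    · exact hz0B
  have hwJbound : ∀ j k, ‖wJ j k‖ ≤ B := by
    intro j k
    simp only [hwJdef]
    split
    · exact hxbound k
    · exact hz0B
  have hrI : ∀ i, Tendsto (fun k => ‖U i (yI i k) - yI i k‖) atTop (nhds 0) := by
    intro i
    have key : ∀ k, ‖U i (yI i k) - yI i k‖^2 ≤ S k / ωminus := by
      intro k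
      by_cases hi : i ∈ Ik k
      · simp only [hyIdef, if_pos hi]
        have h2 : ω k i * ‖U i (x k) - x k‖^2 ≤ S k :=
          Finset.single_le_sum (f := fun j => ω k j * ‖U j (x k) - x k‖^2)
            (fun j hj => mul_nonneg (hωnonneg k j hj) (sq_nonneg _)) hi
        rw [le_div_iff₀ hωminus.1]
        nlinarith [(hω k i hi).1, sq_nonneg ‖U i (x k) - x k‖]
      · have e0 : yI i k = z0 := by simp only [hyIdef]; rw [if_neg hi]
        rw [e0, show U i z0 = z0 from hz0 i, sub_self, norm_zero]
        simpa using div_nonneg (hSnonneg k) hωminus.1.le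
    have h2 : Tendsto (fun k => Real.sqrt (S k / ωminus)) atTop (nhds 0) := by
      have h3 : Tendsto (fun k => S k / ωminus) atTop (nhds 0) := by
        simpa using hStend.div_const ωminus
      simpa [Real.sqrt_zero] using h3.sqrt
    refine squeeze_zero (fun k => norm_nonneg _) (fun k => ?_) h2
    calc ‖U i (yI i k) - yI i k‖ = Real.sqrt (‖U i (yI i k) - yI i k‖^2) :=
          (Real.sqrt_sq (norm_nonneg _)).symm
      _ ≤ Real.sqrt (S k / ωminus) := Real.sqrt_le_sqrt (key k)
  have hpI : ∀ i, Tendsto (fun k => p i (yI i k)) atTop (nhds 0) := fun i =>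
    (hiv (yI i) (hboundedOf _ (hyIbound i)) i).mpr (hrI i)
  have hpz0 : ∀ i, p i z0 = 0 := by
    intro i
    have := hz0 i
    rw [hpfix i] at this
    exact this
  have hsupI : Tendsto (fun k => (Ik k).sup' (hIkne k) fun i => p i (x k)) atTop (nhds 0) := by
    refine squeeze_zero (g := fun k => ∑ i : Fin m, p i (yI i k)) (fun k => ?_) (fun k => ?_) ?_
    · obtain ⟨i, hi⟩ := hIkne k
      exact le_trans (hpnonneg i (x k)) (Finset.le_sup' (f := fun i => p i (x k)) hi)
    · rw [Finset.sup'_le_iff]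
      intro i hi
      have e : p i (x k) = p i (yI i k) := by simp only [hyIdef]; rw [if_pos hi]
      rw [e]
      exact Finset.single_le_sum (f := fun j => p j (yI j k))
        (fun j _ => hpnonneg j _) (Finset.mem_univ i)
    · have h1 := tendsto_finset_sum Finset.univ (fun i (_ : i ∈ Finset.univ) => hpI i)
      simpa using h1
  have hsupJ := hiii hsupI
  have hsupJnonneg : ∀ k, 0 ≤ (Jk k).sup' ((hIkne k).mono (hIJ k)) fun i => p i (x k) := by
    intro k
    obtain ⟨i, hi⟩ := (hIkne k).mono (hIJ k)
    exact le_trans (hpnonneg i (x k)) (Finset.le_sup' (f := fun i => p i (x k)) hi)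
  have hpJ : ∀ j, Tendsto (fun k => p j (wJ j k)) atTop (nhds 0) := by
    intro j
    refine squeeze_zero (fun k => hpnonneg j _) (fun k => ?_) hsupJ
    by_cases hj : j ∈ Jk k
    · simp only [hwJdef, if_pos hj]
      exact Finset.le_sup' (f := fun i => p i (x k)) hj
    · simp only [hwJdef, if_neg hj, hpz0 j]
      exact hsupJnonneg k
  have hrJ : ∀ j, Tendsto (fun k => ‖U j (wJ j k) - wJ j k‖) atTop (nhds 0) := fun j =>
    (hiv (wJ j) (hboundedOf _ (hwJbound j)) j).mp (hpJ j)
  -- step sizes tend to zero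
  have hstep : Tendsto (fun k => ‖x (k+1) - x k‖) atTop (nhds 0) := by
    have key : ∀ k, ‖x (k+1) - x k‖ ≤ 2 * Real.sqrt (S k) := by
      intro k
      have h1 : x (k+1) - x k = α k • v k := by rw [hrec' k]; abel
      rw [h1, norm_smul, Real.norm_eq_abs, abs_of_pos (hαk k).1]
      have h2 : ‖v k‖ ≤ Real.sqrt (S k) := by
        rw [← Real.sqrt_sq (norm_nonneg (v k))]
        exact Real.sqrt_le_sqrt (hvnorm k)
      nlinarith [Real.sqrt_nonneg (S k), (hαk k).2, (hαk k).1, norm_nonneg (v k)]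
    refine squeeze_zero (fun k => norm_nonneg _) key ?_
    have h3 := hStend.sqrt
    rw [Real.sqrt_zero] at h3
    simpa using h3.const_mul 2
  have hgap : ∀ ε > (0:ℝ), ∃ N, ∀ q ≥ N, ∀ l ≤ s, ‖x (q + l) - x q‖ < ε := by
    intro ε hε
    obtain ⟨N, hN⟩ := (Metric.tendsto_atTop.mp hstep) (ε / (s+1)) (by positivity)
    refine ⟨N, fun q hq l hl => ?_⟩
    have key : ∀ l', ‖x (q + l') - x q‖ ≤ (l' : ℝ) * (ε/((s:ℝ)+1)) := by
      intro l'
      induction l' with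
      | zero => simp
      | succ n ih =>
        have h2 : ‖x (q+n+1) - x (q+n)‖ < ε/((s:ℝ)+1) := by
          have h3 := hN (q+n) (le_trans hq (Nat.le_add_right q n))
          rwa [Real.dist_eq, sub_zero, abs_of_nonneg (norm_nonneg _)] at h3
        have e : q + (n+1) = q + n + 1 := by omega
        have hsplit : ‖x (q + (n+1)) - x q‖
            ≤ ‖x (q+n+1) - x (q+n)‖ + ‖x (q+n) - x q‖ := by
          rw [e]
          calc ‖x (q+n+1) - x q‖
              = ‖(x (q+n+1) - x (q+n)) + (x (q+n) - x q)‖ := by congr 1; abel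
            _ ≤ _ := norm_add_le _ _
        push_cast
        push_cast at ih
        linarith
    have h4 := key l
    have h5 : (l:ℝ) * (ε/((s:ℝ)+1)) ≤ (s:ℝ) * (ε/((s:ℝ)+1)) := by
      refine mul_le_mul_of_nonneg_right ?_ (by positivity)
      exact_mod_cast hl
    have h6 : (s:ℝ) * (ε/((s:ℝ)+1)) < ε := by
      have h7 : (s:ℝ)/((s:ℝ)+1) < 1 := by
        rw [div_lt_one (by positivity)]
        linarith
      calc (s:ℝ) * (ε/((s:ℝ)+1)) = ε * ((s:ℝ)/((s:ℝ)+1)) := by ring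
        _ < ε * 1 := mul_lt_mul_of_pos_left h7 hε
        _ = ε := mul_one ε
    linarith
  -- cluster lemma
  have hcluster : ∀ ns : ℕ → ℕ, Tendsto ns atTop atTop →
      ∃ (ms : ℕ → ℕ) (z : H), Tendsto (fun n => ns (ms n)) atTop atTop ∧
        (∀ i, z ∈ fixedPoints (U i)) ∧
        ∀ w, Tendsto (fun n => ⟪x (ns (ms n)), w⟫) atTop (nhds ⟪z, w⟫) := by
    intro ns hns
    obtain ⟨φ, z, hφ, hzw⟩ := weak_bw (fun n => x (ns n)) B (fun n => hxbound _)
    have hnsφ : Tendsto (fun n => ns (φ n)) atTop atTop := hns.comp hφ.tendsto_atTop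
    refine ⟨φ, z, hnsφ, ?_, hzw⟩
    intro i
    choose l hls hlJ using fun n => hcover (ns (φ n)) i
    set q : ℕ → ℕ := fun n => ns (φ n) + l n with hqdef
    have hqtend : Tendsto q atTop atTop :=
      tendsto_atTop_mono (fun n => Nat.le_add_right _ _) hnsφ
    have hres : Tendsto (fun n => ‖U i (x (q n)) - x (q n)‖) atTop (nhds 0) := by
      have h1 := (hrJ i).comp hqtend
      have e : ∀ n, wJ i (q n) = x (q n) := fun n => if_pos (hlJ n)
      have e2 : (fun n => ‖U i (wJ i (q n)) - wJ i (q n)‖)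
          = fun n => ‖U i (x (q n)) - x (q n)‖ := funext fun n => by rw [e n]
      rw [← e2]
      exact h1
    have hdiffn : Tendsto (fun n => ‖x (q n) - x (ns (φ n))‖) atTop (nhds 0) := by
      rw [Metric.tendsto_atTop]
      intro ε hε
      obtain ⟨N, hN⟩ := hgap ε hε
      obtain ⟨N', hN'⟩ := Filter.eventually_atTop.mp (hnsφ.eventually_ge_atTop N)
      refine ⟨N', fun n hn => ?_⟩
      rw [Real.dist_eq, sub_zero, abs_of_nonneg (norm_nonneg _)]
      exact hN (ns (φ n)) (hN' n hn) (l n) (hls n).le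
    have hdiff : Tendsto (fun n => x (q n) - x (ns (φ n))) atTop (nhds 0) := by
      rw [tendsto_zero_iff_norm_tendsto_zero]
      exact hdiffn
    have hzw' : ∀ w, Tendsto (fun n => ⟪x (q n), w⟫) atTop (nhds ⟪z, w⟫) := by
      intro w
      have h1 : Tendsto (fun n => ⟪x (q n) - x (ns (φ n)), w⟫) atTop (nhds 0) := by
        have := Filter.Tendsto.inner (𝕜 := ℝ) hdiff (tendsto_const_nhds (x := w))
        simpa using this
      have h2 := (hzw w).add h1
      rw [add_zero] at h2
      have e : (fun n => ⟪x (ns (φ n)), w⟫ + ⟪x (q n) - x (ns (φ n)), w⟫)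
          = fun n => ⟪x (q n), w⟫ := by
        funext n
        rw [inner_sub_left]
        ring
      rwa [e] at h2
    exact hwr i (fun n => x (q n)) z hzw' hres
  -- uniqueness of weak cluster points
  have huniq : ∀ z1 z2 : H, (∀ i, z1 ∈ fixedPoints (U i)) → (∀ i, z2 ∈ fixedPoints (U i)) →
      (∃ t1 : ℕ → ℕ, Tendsto t1 atTop atTop ∧
        ∀ w, Tendsto (fun n => ⟪x (t1 n), w⟫) atTop (nhds ⟪z1, w⟫)) →
      (∃ t2 : ℕ → ℕ, Tendsto t2 atTop atTop ∧
        ∀ w, Tendsto (fun n => ⟪x (t2 n), w⟫) atTop (nhds ⟪z2, w⟫)) → z1 = z2 := by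
    rintro z1 z2 hz1 hz2 ⟨t1, ht1, hw1⟩ ⟨t2, ht2, hw2⟩
    obtain ⟨d1, hd1⟩ := hlim z1 hz1
    obtain ⟨d2, hd2⟩ := hlim z2 hz2
    have hkey : Tendsto (fun k => ⟪x k, z1 - z2⟫) atTop
        (nhds ((‖z1‖^2 - ‖z2‖^2 - (d1 - d2))/2)) := by
      have e : ∀ k, ⟪x k, z1 - z2⟫
          = (‖z1‖^2 - ‖z2‖^2 - (‖x k - z1‖^2 - ‖x k - z2‖^2))/2 := by
        intro k
        have e1 := norm_sub_sq_real (x k) z1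
        have e2 := norm_sub_sq_real (x k) z2
        rw [inner_sub_right]
        linarith
      have h1 : Tendsto (fun k => (‖z1‖^2 - ‖z2‖^2 - (‖x k - z1‖^2 - ‖x k - z2‖^2))/2)
          atTop (nhds ((‖z1‖^2 - ‖z2‖^2 - (d1 - d2))/2)) :=
        ((tendsto_const_nhds.sub (hd1.sub hd2))).div_const 2
      have e' : (fun k => ⟪x k, z1 - z2⟫)
          = fun k => (‖z1‖^2 - ‖z2‖^2 - (‖x k - z1‖^2 - ‖x k - z2‖^2))/2 := funext e
      rw [e']
      exact h1
    have u1 := tendsto_nhds_unique (hw1 (z1 - z2)) (hkey.comp ht1)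
    have u2 := tendsto_nhds_unique (hw2 (z1 - z2)) (hkey.comp ht2)
    have h3 : ⟪z1 - z2, z1 - z2⟫ = 0 := by
      rw [inner_sub_left]
      linarith
    have h4 : z1 - z2 = 0 := inner_self_eq_zero.mp h3
    exact sub_eq_zero.mp h4
  obtain ⟨ms0, xinf, hms0, hxinfC, hxinfw⟩ := hcluster id tendsto_id
  refine ⟨xinf, Set.mem_iInter.mpr hxinfC, fun w => ?_⟩
  apply tendsto_of_subseq_tendsto
  intro ns hns
  obtain ⟨ms, z, hmst, hzC, hzw⟩ := hcluster ns hns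
  have hz_eq : z = xinf :=
    huniq z xinf hzC hxinfC ⟨fun n => ns (ms n), hmst, hzw⟩ ⟨fun n => ms0 n, hms0, hxinfw⟩
  exact ⟨ms, hz_eq ▸ hzw w⟩
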